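/- arXiv:1311.1024 — 12 statements merged into one kernel-verified Lean document; each statement's English description precedes it below -/
import Mathlib

section
/- Let A = {1, a₂, a₃} with 1 < a₂ < a₃, let s ≥ 1 and let k, p be natural numbers with p ≤ k. Suppose that for every x with k·a₃ ≤ x < (k+1)·a₃ there exist natural numbers c₁, c₂, c₃ with c₃·a₃ + c₂·a₂ + c₁ = x, c₁ + c₂ + c₃ ≤ s and c₃ ≥ k − p (i.e. A generates the k-th stride with maximum order p). Then A generates, using at most s stamps, every value x with p·a₃ ≤ x < k·a₃. -/
def Generates (a₂ a₃ s x : ℕ) : Prop :=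
  ∃ c₁ c₂ c₃ : ℕ, c₃ * a₃ + c₂ * a₂ + c₁ = x ∧ c₁ + c₂ + c₃ ≤ s

theorem stmt0 (a₂ a₃ s k p : ℕ) (ha₂ : 1 < a₂) (ha₃ : a₂ < a₃) (hs : 1 ≤ s) (hpk : p ≤ k)
    (hgen : ∀ x : ℕ, k * a₃ ≤ x → x < (k + 1) * a₃ →
      ∃ c₁ c₂ c₃ : ℕ, c₃ * a₃ + c₂ * a₂ + c₁ = x ∧ c₁ + c₂ + c₃ ≤ s ∧ k - p ≤ c₃) :
    ∀ x : ℕ, p * a₃ ≤ x → x < k * a₃ → Generates a₂ a₃ s x := by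
  intro x hx1 hx2
  have ha3 : 0 < a₃ := by omega
  set j := x / a₃ with hj
  have hmod : x % a₃ < a₃ := Nat.mod_lt _ ha3
  have hxeq : j * a₃ + x % a₃ = x := by
    rw [hj, mul_comm]; exact Nat.div_add_mod x a₃
  have hpj : p ≤ j := by
    by_contra h
    have : j + 1 ≤ p := by omega
    have : (j + 1) * a₃ ≤ p * a₃ := Nat.mul_le_mul_right _ this
    have : (j + 1) * a₃ ≤ x := le_trans this hx1
    nlinarith [hmod, hxeq]
  have hjk : j < k := by
    by_contra h
    have : k ≤ j := by omega
    have : k * a₃ ≤ j * a₃ := Nat.mul_le_mul_right _ this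
    omega
  set y := x + (k - j) * a₃ with hy
  have hy1 : k * a₃ ≤ y := by
    have : j * a₃ + (k - j) * a₃ = k * a₃ := by
      rw [← Nat.add_mul]; congr 1; omega
    omega
  have hy2 : y < (k + 1) * a₃ := by
    have h1 : j * a₃ + (k - j) * a₃ = k * a₃ := by
      rw [← Nat.add_mul]; congr 1; omega
    have h2 : (k + 1) * a₃ = k * a₃ + a₃ := by ring
    omega
  obtain ⟨c₁, c₂, c₃, heq, hle, hc₃⟩ := hgen y hy1 hy2
  refine ⟨c₁, c₂, c₃ - (k - j), ?_, by omega⟩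
  have hc₃' : k - j ≤ c₃ := by omega
  have : (c₃ - (k - j)) * a₃ + (k - j) * a₃ = c₃ * a₃ := by
    rw [← Nat.add_mul]; congr 1; omega
  omega
end

section
/- Let A = {1, a₂, a₃} with 1 < a₂ < a₃ and s ≥ 1, and suppose A has a non-trivial cover C(A,3,s). Then there exist natural numbers k and Y with C(A,3,s) = (k+1)·a₃ + Y, 0 ≤ Y < a₃ − 1 (in particular Y ≠ a₃ − 1), and 0 ≤ k < s. -/
def IsCover (a₂ a₃ s X : ℕ) : Prop :=
  (∀ x : ℕ, 1 ≤ x → x ≤ X → Generates a₂ a₃ s x) ∧ ¬ Generates a₂ a₃ s (X + 1)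

theorem stmt1 (a₂ a₃ s X : ℕ) (ha₂ : 1 < a₂) (ha₃ : a₂ < a₃) (hs : 1 ≤ s)
    (hX : IsCover a₂ a₃ s X) (hnt : a₃ ≤ X) :
    ∃ k Y : ℕ, X = (k + 1) * a₃ + Y ∧ Y < a₃ - 1 ∧ k < s := by
  obtain ⟨hgen, hnot⟩ := hX
  obtain ⟨c₁, c₂, c₃, hc, hsum⟩ := hgen X (by omega) le_rfl
  have hX_le : X ≤ s * a₃ := by
    calc X = c₃ * a₃ + c₂ * a₂ + c₁ := hc.symm
    _ ≤ c₃ * a₃ + c₂ * a₃ + c₁ * a₃ := by nlinarith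
    _ = (c₁ + c₂ + c₃) * a₃ := by ring
    _ ≤ s * a₃ := Nat.mul_le_mul_right _ hsum
  set q := X / a₃ with hq
  set r := X % a₃ with hr
  have hdiv : q * a₃ + r = X := by rw [hq, hr, Nat.mul_comm]; exact Nat.div_add_mod X a₃
  have hrlt : r < a₃ := Nat.mod_lt _ (by omega)
  have hq1 : 1 ≤ q := (Nat.le_div_iff_mul_le (by omega)).mpr (by omega)
  by_cases hqs : q < s
  · refine ⟨q - 1, r, ?_, ?_, by omega⟩
    · have h1 : (q - 1 + 1) * a₃ = q * a₃ := by
        have : q - 1 + 1 = q := by omega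
        rw [this]
      omega
    · by_contra h
      have hreq : r = a₃ - 1 := by omega
      apply hnot
      refine ⟨0, 0, q + 1, ?_, by omega⟩
      have h2 : (q + 1) * a₃ = q * a₃ + a₃ := by ring
      omega
  · have hsq : s * a₃ ≤ q * a₃ := Nat.mul_le_mul_right _ (by omega)
    refine ⟨s - 1, 0, ?_, by omega, by omega⟩
    have h1 : (s - 1 + 1) * a₃ = s * a₃ := by
      have : s - 1 + 1 = s := by omega
      rw [this]
    omega
end

section
/- Let A = {1, a₂, a₃} with 1 < a₂ < a₃ and s ≥ 1 have a non-trivial cover, and write C(A,3,s) = (k+1)·a₃ + Y with 0 ≤ Y < a₃ − 1 and 0 ≤ k < s. Then there exists p ≤ k such that A is an (s−k)-stride generator SG(s−k, p); moreover y = Y + 1 is a break of SG(s−k, p), the break order of y (if y is not canonical) exceeds k+1, and every break of SG(s−k, p) smaller than y is non-canonical with break order ≤ k+1 (so y is the first break with break order exceeding k+1, canonical breaks counting as having infinite break order). -/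
def SGRep (n a₂ a₃ x i : ℕ) : Prop :=
  ∃ c₁ c₂ : ℕ, x + i * a₃ = c₂ * a₂ + c₁ ∧ c₂ + c₁ ≤ n + i

def SGBreakRep (n a₂ a₃ y j : ℕ) : Prop :=
  ∃ c₁ c₂ : ℕ, y + j * a₃ = c₂ * a₂ + c₁ ∧ c₂ + c₁ ≤ n + j - 1

def IsSG (n p a₂ a₃ : ℕ) : Prop :=
  (∀ x : ℕ, 0 < x → x < a₃ → ∃ i ≤ p, SGRep n a₂ a₃ x i) ∧
  (∃ x : ℕ, 0 < x ∧ x < a₃ ∧ SGRep n a₂ a₃ x p ∧ ∀ i < p, ¬ SGRep n a₂ a₃ x i) ∧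
  (∃ y : ℕ, 0 < y ∧ y < a₃ ∧ ∀ j ≤ p + 1, ¬ SGBreakRep n a₂ a₃ y j)

def IsBreak (n p a₂ a₃ y : ℕ) : Prop :=
  0 < y ∧ y < a₃ ∧ ∀ j ≤ p + 1, ¬ SGBreakRep n a₂ a₃ y j

def BreakOrder (n a₂ a₃ y q : ℕ) : Prop :=
  SGBreakRep n a₂ a₃ y q ∧ ∀ j < q, ¬ SGBreakRep n a₂ a₃ y j

open Classical in
noncomputable def minIdx (n a₂ a₃ x : ℕ) : ℕ :=
  if h : ∃ i, SGRep n a₂ a₃ x i then Nat.find h else 0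

open Classical in
theorem minIdx_spec {n a₂ a₃ x : ℕ} (h : ∃ i, SGRep n a₂ a₃ x i) :
    SGRep n a₂ a₃ x (minIdx n a₂ a₃ x) := by
  unfold minIdx
  rw [dif_pos h]
  exact Nat.find_spec h

open Classical in
theorem minIdx_le {n a₂ a₃ x i : ℕ} (h : SGRep n a₂ a₃ x i) :
    minIdx n a₂ a₃ x ≤ i := by
  unfold minIdx
  rw [dif_pos ⟨i, h⟩]
  exact Nat.find_le h

open Classical in
theorem minIdx_min {n a₂ a₃ x j : ℕ} (hex : ∃ i, SGRep n a₂ a₃ x i)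
    (hj : j < minIdx n a₂ a₃ x) : ¬ SGRep n a₂ a₃ x j := by
  unfold minIdx at hj
  rw [dif_pos hex] at hj
  exact Nat.find_min hex hj

theorem stmt2 (a₂ a₃ s X k Y : ℕ) (ha₂ : 1 < a₂) (ha₃ : a₂ < a₃) (hs : 1 ≤ s)
    (hX : IsCover a₂ a₃ s X) (hnt : a₃ ≤ X)
    (hXk : X = (k + 1) * a₃ + Y) (hY : Y < a₃ - 1) (hk : k < s) :
    ∃ p ≤ k, IsSG (s - k) p a₂ a₃ ∧
      IsBreak (s - k) p a₂ a₃ (Y + 1) ∧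
      (∀ q : ℕ, BreakOrder (s - k) a₂ a₃ (Y + 1) q → k + 1 < q) ∧
      (∀ y' : ℕ, IsBreak (s - k) p a₂ a₃ y' → y' < Y + 1 →
        ∃ q : ℕ, BreakOrder (s - k) a₂ a₃ y' q ∧ q ≤ k + 1) := by
  classical
  have ha₃1 : 1 < a₃ := lt_trans ha₂ ha₃
  set n := s - k with hn
  -- Every 0 < x < a₃ has an SGRep with index ≤ k.
  have hrep : ∀ x, 0 < x → x < a₃ → ∃ i ≤ k, SGRep n a₂ a₃ x i := by
    intro x hx0 hxa
    have hsucc : (k + 1) * a₃ = k * a₃ + a₃ := by ring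
    have hgen : Generates a₂ a₃ s (x + k * a₃) :=
      hX.1 _ (by omega) (by omega)
    obtain ⟨c₁, c₂, c₃, heq, hle⟩ := hgen
    have hc₃ : c₃ ≤ k := by
      by_contra h
      push_neg at h
      have h1 : (k + 1) * a₃ ≤ c₃ * a₃ := Nat.mul_le_mul_right _ h
      omega
    refine ⟨k - c₃, by omega, c₁, c₂, ?_, by omega⟩
    have h3 : (k - c₃) * a₃ + c₃ * a₃ = k * a₃ := by
      rw [← Nat.add_mul, Nat.sub_add_cancel hc₃]
    omega
  have hex : ∀ x, 0 < x → x < a₃ → ∃ i, SGRep n a₂ a₃ x i := by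
    intro x h1 h2
    obtain ⟨i, _, hi⟩ := hrep x h1 h2
    exact ⟨i, hi⟩
  -- No SGBreakRep for Y+1 with index ≤ k+1.
  have hbreakY : ∀ j ≤ k + 1, ¬ SGBreakRep n a₂ a₃ (Y + 1) j := by
    rintro j hj ⟨c₁, c₂, heq, hle⟩
    apply hX.2
    refine ⟨c₁, c₂, k + 1 - j, ?_, by omega⟩
    have h3 : (k + 1 - j) * a₃ + j * a₃ = (k + 1) * a₃ := by
      rw [← Nat.add_mul, Nat.sub_add_cancel hj]
    omega
  -- Every 0 < y' ≤ Y has an SGBreakRep with index ≤ k+1.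
  have hbel : ∀ y', 0 < y' → y' ≤ Y → ∃ j ≤ k + 1, SGBreakRep n a₂ a₃ y' j := by
    intro y' hy0 hyY
    have hgen : Generates a₂ a₃ s (y' + (k + 1) * a₃) :=
      hX.1 _ (by omega) (by omega)
    obtain ⟨c₁, c₂, c₃, heq, hle⟩ := hgen
    have hy'a : y' < a₃ := by omega
    have hc₃ : c₃ ≤ k + 1 := by
      by_contra h
      push_neg at h
      have h1 : (k + 2) * a₃ ≤ c₃ * a₃ := Nat.mul_le_mul_right _ h
      have h2 : (k + 2) * a₃ = (k + 1) * a₃ + a₃ := by ring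
      omega
    refine ⟨k + 1 - c₃, by omega, c₁, c₂, ?_, by omega⟩
    have h3 : (k + 1 - c₃) * a₃ + c₃ * a₃ = (k + 1) * a₃ := by
      rw [← Nat.add_mul, Nat.sub_add_cancel hc₃]
    omega
  -- Define p as the maximum of the minimal indices.
  set p := (Finset.Ioo 0 a₃).sup (fun x => minIdx n a₂ a₃ x) with hp
  have hne : (Finset.Ioo 0 a₃).Nonempty := ⟨1, by simp; omega⟩
  have hpk : p ≤ k := by
    apply Finset.sup_le
    intro x hx
    simp only [Finset.mem_Ioo] at hx
    obtain ⟨i, hik, hi⟩ := hrep x hx.1 hx.2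
    exact le_trans (minIdx_le hi) hik
  refine ⟨p, hpk, ⟨?_, ?_, ?_⟩, ⟨Nat.succ_pos Y, by omega, fun j hj => hbreakY j (by omega)⟩, ?_, ?_⟩
  · -- SG1
    intro x hx0 hxa
    refine ⟨minIdx n a₂ a₃ x, ?_, minIdx_spec (hex x hx0 hxa)⟩
    exact Finset.le_sup (f := fun x => minIdx n a₂ a₃ x) (Finset.mem_Ioo.2 ⟨hx0, hxa⟩)
  · -- SG2
    obtain ⟨x, hxmem, hxeq⟩ := Finset.exists_mem_eq_sup _ hne (fun x => minIdx n a₂ a₃ x)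
    simp only [Finset.mem_Ioo] at hxmem
    have hx : minIdx n a₂ a₃ x = p := hxeq.symm
    refine ⟨x, hxmem.1, hxmem.2, ?_, ?_⟩
    · rw [← hx]; exact minIdx_spec (hex x hxmem.1 hxmem.2)
    · intro i hi
      exact minIdx_min (hex x hxmem.1 hxmem.2) (by omega)
  · -- SG3
    exact ⟨Y + 1, Nat.succ_pos Y, by omega, fun j hj => hbreakY j (by omega)⟩
  · -- Break order of Y+1 exceeds k+1
    rintro q ⟨hq, _⟩
    by_contra h
    exact hbreakY q (by omega) hq
  · -- Smaller breaks have break order ≤ k+1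
    rintro y' ⟨hy0, hya, _⟩ hylt
    obtain ⟨j, hjk, hj⟩ := hbel y' hy0 (by omega)
    have hexb : ∃ j, SGBreakRep n a₂ a₃ y' j := ⟨j, hj⟩
    refine ⟨Nat.find hexb, ⟨Nat.find_spec hexb, fun j' hj' => Nat.find_min hexb hj'⟩, ?_⟩
    exact le_trans (Nat.find_le hj) hjk
end

section
/- Each set A = {1, a₂, a₃} with 1 < a₂ < a₃ defines a unique canonical stride generator: if A is both an n-stride generator SG(n,p) and an n′-stride generator SG(n′,p′), and both stride generators are canonical, then n = n′ and p = p′. -/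
def CanonicalBreak (n a₂ a₃ y : ℕ) : Prop :=
  ∀ j : ℕ, ¬ SGBreakRep n a₂ a₃ y j

theorem stmt5 (a₂ a₃ n n' p p' : ℕ) (ha₂ : 1 < a₂) (ha₃ : a₂ < a₃)
    (hn : 1 ≤ n) (hn' : 1 ≤ n')
    (h1 : IsSG n p a₂ a₃) (h2 : IsSG n' p' a₂ a₃)
    (hc1 : ∀ y : ℕ, IsBreak n p a₂ a₃ y → CanonicalBreak n a₂ a₃ y)
    (hc2 : ∀ y : ℕ, IsBreak n' p' a₂ a₃ y → CanonicalBreak n' a₂ a₃ y) :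
    n = n' ∧ p = p' := by
  obtain ⟨hA1, hA2, hA3⟩ := h1
  obtain ⟨hB1, hB2, hB3⟩ := h2
  have hnn : n = n' := by
    rcases Nat.lt_trichotomy n n' with hlt | heq | hgt
    · exfalso
      obtain ⟨y, hy0, hy3, hyb⟩ := hB3
      have hcan := hc2 y ⟨hy0, hy3, hyb⟩
      obtain ⟨i, hi, c₁, c₂, heq, hle⟩ := hA1 y hy0 hy3
      exact hcan i ⟨c₁, c₂, heq, by omega⟩
    · exact heq
    · exfalso
      obtain ⟨y, hy0, hy3, hyb⟩ := hA3
      have hcan := hc1 y ⟨hy0, hy3, hyb⟩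
      obtain ⟨i, hi, c₁, c₂, heq, hle⟩ := hB1 y hy0 hy3
      exact hcan i ⟨c₁, c₂, heq, by omega⟩
  subst hnn
  refine ⟨rfl, ?_⟩
  rcases Nat.lt_trichotomy p p' with hlt | heq | hgt
  · exfalso
    obtain ⟨x, hx0, hx3, _, hmin⟩ := hB2
    obtain ⟨i, hi, hrep⟩ := hA1 x hx0 hx3
    exact hmin i (lt_of_le_of_lt hi hlt) hrep
  · exact heq
  · exfalso
    obtain ⟨x, hx0, hx3, _, hmin⟩ := hA2
    obtain ⟨i, hi, hrep⟩ := hB1 x hx0 hx3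
    exact hmin i (lt_of_le_of_lt hi hgt) hrep
end

section
/- If the set {1, a₂, a₃} (1 < a₂ < a₃) is both an n-stride generator SG(n,p) and an n′-stride generator SG(n′,p′) with n′ < n, then p′ > p + 1. -/
theorem stmt6 (a₂ a₃ n n' p p' : ℕ) (ha₂ : 1 < a₂) (ha₃ : a₂ < a₃)
    (hn' : 1 ≤ n') (hlt : n' < n)
    (h1 : IsSG n p a₂ a₃) (h2 : IsSG n' p' a₂ a₃) :
    p + 1 < p' := by
  obtain ⟨y, hy0, hya, hy⟩ := h1.2.2
  obtain ⟨i, hip, c₁, c₂, heq, hle⟩ := h2.1 y hy0 hya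
  by_contra h
  push_neg at h
  have hi : i ≤ p + 1 := le_trans hip h
  exact hy i hi ⟨c₁, c₂, heq, by omega⟩
end

section
/- In a stride generator no thread is covered by another thread of different order: if {1, a₂, a₃} is an n-stride generator SG(n,p), and i, j, b₂, c₂ are natural numbers with j < i ≤ p, b₂ ≤ n + i and c₂ ≤ n + j, then it is not the case that both b₂·a₂ − i·a₃ ≥ c₂·a₂ − j·a₃ and b₂·a₂ − i·a₃ + (n + i − b₂) ≤ c₂·a₂ − j·a₃ + (n + j − c₂) (as integers); that is, the thread T_i(b₂) is not covered by the thread T_j(c₂). -/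
theorem stmt7 (n p a₂ a₃ i j b₂ c₂ : ℕ) (hn : 1 ≤ n) (ha₂ : 1 < a₂) (ha₃ : a₂ < a₃)
    (hsg : IsSG n p a₂ a₃) (hji : j < i) (hip : i ≤ p)
    (hb : b₂ ≤ n + i) (hc : c₂ ≤ n + j) :
    ¬ (((b₂ : ℤ) * a₂ - i * a₃ ≥ (c₂ : ℤ) * a₂ - j * a₃) ∧
       ((b₂ : ℤ) * a₂ - i * a₃ + ((n : ℤ) + i - b₂) ≤
        (c₂ : ℤ) * a₂ - j * a₃ + ((n : ℤ) + j - c₂))) := by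
  rintro ⟨h1, h2⟩
  obtain ⟨-, ⟨x, hx0, hxa, ⟨c₁, C, hrep, hsum⟩, hno⟩, -⟩ := hsg
  have ha₂' : (1:ℤ) < (a₂:ℤ) := by exact_mod_cast ha₂
  have ha₃' : ((a₂:ℤ)) < (a₃:ℤ) := by exact_mod_cast ha₃
  have hji' : (j:ℤ) < i := by exact_mod_cast hji
  have K1 : ((i:ℤ) - j) * a₃ ≤ ((b₂:ℤ) - c₂) * a₂ := by linarith [h1]
  have K2 : ((b₂:ℤ) - c₂) * (a₂ - 1) ≤ ((i:ℤ) - j) * (a₃ - 1) := by nlinarith [h2]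
  have he : c₂ < b₂ := by
    by_contra hle
    push_neg at hle
    have hle' : (b₂:ℤ) ≤ c₂ := by exact_mod_cast hle
    nlinarith [K1, mul_pos (show (0:ℤ) < (i:ℤ) - j by linarith)
      (show (0:ℤ) < (a₃:ℤ) by linarith)]
  have hNat : (i - j) * a₃ ≤ (b₂ - c₂) * a₂ := by
    zify [he.le, hji.le]
    exact K1
  have hrepℤ : (x:ℤ) + p * a₃ = C * a₂ + c₁ := by exact_mod_cast hrep
  have hsumℤ : (C:ℤ) + c₁ ≤ n + p := by exact_mod_cast hsum
  have hdp : i - j ≤ p := by omega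
  have hm : p - (i - j) < p := by omega
  apply hno (p - (i - j)) hm
  by_cases hC : b₂ - c₂ ≤ C
  · refine ⟨c₁ + ((b₂ - c₂) * a₂ - (i - j) * a₃), C - (b₂ - c₂), ?_, ?_⟩
    · zify [he.le, hji.le, hC, hNat, hdp]
      linear_combination hrepℤ
    · zify [he.le, hji.le, hC, hNat, hdp]
      linarith [K2, hsumℤ]
  · push_neg at hC
    refine ⟨x + (p - (i - j)) * a₃, 0, by ring, ?_⟩
    have hC' : (C:ℤ) ≤ (b₂:ℤ) - c₂ - 1 := by
      have : (C:ℤ) < (b₂ - c₂ : ℕ) := by exact_mod_cast hC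
      rw [Nat.cast_sub he.le] at this
      linarith
    have hmul : (C:ℤ) * ((a₂:ℤ) - 1) ≤ ((b₂:ℤ) - c₂ - 1) * ((a₂:ℤ) - 1) :=
      mul_le_mul_of_nonneg_right hC' (by linarith)
    zify [hji.le, hdp]
    linarith [hmul, K2, hsumℤ, hrepℤ, ha₂']
end

section
/- Let 2 ≤ a₂ < a₃ and write a₃ = C₂·a₂ + C₁ with C₂ = ⌊a₃/a₂⌋ and 0 ≤ C₁ < a₂. If C₁ = 0 or a₂ − C₂ ≤ C₁ < a₂, then {1, a₂, a₃} is an order-0 stride generator SG(n, 0) with n = a₂ + C₂ − 2, and its least break is y = C₂·a₂ − 1. -/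
private lemma sg8_aux_j0 (a₂ C₂ c₂ c₁ d P Q R : ℕ) (ha₂ : 2 ≤ a₂)
    (hQ : a₂ ≤ Q) (e : Q - 1 = P + c₁) (hd : C₂ = c₂ + 1 + d)
    (hexp : Q = P + a₂ + R) (hdle : d ≤ R)
    (s : c₂ + c₁ ≤ a₂ + C₂ - 2 + 0 - 1) : False := by omega

private lemma sg8_aux_j1 (a₂ C₂ C₁ c₂ c₁ d P Q R : ℕ) (ha₂ : 2 ≤ a₂) (hC₂ : 1 ≤ C₂)
    (hC₁ : C₁ < a₂) (h : C₁ = 0 ∨ a₂ - C₂ ≤ C₁) (hQ : a₂ ≤ Q)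
    (e : Q - 1 + (Q + C₁) = P + c₁) (hd : 2 * C₂ = c₂ + d)
    (hexp : Q + Q = P + R) (h2d : 2 * d ≤ R)
    (hdd : d = 0 ∨ d + a₂ ≤ R + 1) (hR0 : d = 0 → R = 0)
    (s : c₂ + c₁ ≤ a₂ + C₂ - 2 + 1 - 1) : False := by omega

private lemma sg8_aux_lb (a₂ C₂ z q r d P Q R : ℕ) (ha₂ : 2 ≤ a₂)
    (hQ : a₂ ≤ Q) (e : P + r = z) (hr : r < a₂) (hd : C₂ = q + 1 + d)
    (hexp : Q = P + a₂ + R) (hdle : d ≤ R) (hR0 : d = 0 → R = 0)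
    (hcon : z + 1 < Q) : q + r ≤ a₂ + C₂ - 2 + 0 - 1 := by omega

private lemma sg8_aux_sg1 (a₂ C₂ C₁ x r a₃ Q : ℕ) (ha₂ : 2 ≤ a₂) (hC₁ : C₁ < a₂)
    (ha3e : Q + C₁ = a₃) (e : Q + r = x) (hx : x < a₃) :
    C₂ + r ≤ a₂ + C₂ - 2 + 0 := by omega

theorem stmt8 (a₂ a₃ : ℕ) (ha₂ : 2 ≤ a₂) (ha₃ : a₂ < a₃)
    (h : a₃ % a₂ = 0 ∨ a₂ - a₃ / a₂ ≤ a₃ % a₂) :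
    IsSG (a₂ + a₃ / a₂ - 2) 0 a₂ a₃ ∧
    IsLeast {y : ℕ | IsBreak (a₂ + a₃ / a₂ - 2) 0 a₂ a₃ y} (a₃ / a₂ * a₂ - 1) := by
  have ha₂pos : 0 < a₂ := by omega
  obtain ⟨C₂, hC₂⟩ : ∃ C₂, a₃ / a₂ = C₂ := ⟨_, rfl⟩
  obtain ⟨C₁, hC₁⟩ : ∃ C₁, a₃ % a₂ = C₁ := ⟨_, rfl⟩
  have ha3e : C₂ * a₂ + C₁ = a₃ := by
    rw [← hC₂, ← hC₁, Nat.mul_comm]; exact Nat.div_add_mod a₃ a₂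
  have hC₂1 : 1 ≤ C₂ := by
    rw [← hC₂]; exact (Nat.one_le_div_iff ha₂pos).mpr (le_of_lt ha₃)
  have hC₁lt : C₁ < a₂ := by rw [← hC₁]; exact Nat.mod_lt _ ha₂pos
  rw [hC₂, hC₁] at h
  rw [hC₂]
  have hQ : a₂ ≤ C₂ * a₂ := Nat.le_mul_of_pos_left a₂ (by omega)
  -- SG1
  have hSG1 : ∀ x : ℕ, 0 < x → x < a₃ → SGRep (a₂ + C₂ - 2) a₂ a₃ x 0 := by
    intro x _ hx
    have e : x / a₂ * a₂ + x % a₂ = x := by rw [Nat.mul_comm]; exact Nat.div_add_mod x a₂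
    have hr : x % a₂ < a₂ := Nat.mod_lt _ ha₂pos
    have hq : x / a₂ ≤ C₂ := by rw [← hC₂]; exact Nat.div_le_div_right (le_of_lt hx)
    refine ⟨x % a₂, x / a₂, by omega, ?_⟩
    rcases Nat.lt_or_ge (x / a₂) C₂ with hlt | hge
    · omega
    · have hqe : x / a₂ = C₂ := le_antisymm hq hge
      rw [hqe] at e
      rw [hqe]
      exact sg8_aux_sg1 a₂ C₂ C₁ x (x % a₂) a₃ (C₂ * a₂) ha₂ hC₁lt ha3e e hx
  -- break at y = C₂ * a₂ - 1
  have hbreak : ∀ j ≤ 0 + 1, ¬ SGBreakRep (a₂ + C₂ - 2) a₂ a₃ (C₂ * a₂ - 1) j := by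
    intro j hj ⟨c₁, c₂, e, s⟩
    interval_cases j
    · simp only [Nat.zero_mul, Nat.add_zero] at e
      have hlt : c₂ < C₂ := by
        by_contra hcon
        push_neg at hcon
        have h1 : C₂ * a₂ ≤ c₂ * a₂ := Nat.mul_le_mul_right _ hcon
        omega
      obtain ⟨d, hd⟩ : ∃ d, C₂ = c₂ + 1 + d := ⟨C₂ - c₂ - 1, by omega⟩
      have hexp : C₂ * a₂ = c₂ * a₂ + a₂ + d * a₂ := by rw [hd]; ring
      have hdle : d ≤ d * a₂ := Nat.le_mul_of_pos_right _ ha₂pos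
      exact sg8_aux_j0 a₂ C₂ c₂ c₁ d (c₂ * a₂) (C₂ * a₂) (d * a₂) ha₂ hQ e hd hexp hdle s
    · simp only [Nat.one_mul] at e
      rw [← ha3e] at e
      have hlt : c₂ ≤ 2 * C₂ := by
        by_contra hcon
        push_neg at hcon
        have h1 : (2 * C₂ + 1) * a₂ ≤ c₂ * a₂ := Nat.mul_le_mul_right _ hcon
        have h2 : (2 * C₂ + 1) * a₂ = C₂ * a₂ + C₂ * a₂ + a₂ := by ring
        omega
      obtain ⟨d, hd⟩ : ∃ d, 2 * C₂ = c₂ + d := ⟨2 * C₂ - c₂, by omega⟩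
      have hexp : C₂ * a₂ + C₂ * a₂ = c₂ * a₂ + d * a₂ := by
        calc C₂ * a₂ + C₂ * a₂ = (2 * C₂) * a₂ := by ring
          _ = (c₂ + d) * a₂ := by rw [hd]
          _ = c₂ * a₂ + d * a₂ := by ring
      have h2d : 2 * d ≤ d * a₂ := by
        calc 2 * d = d * 2 := by ring
          _ ≤ d * a₂ := Nat.mul_le_mul_left _ ha₂
      have hdd : d = 0 ∨ d + a₂ ≤ d * a₂ + 1 := by
        rcases Nat.eq_zero_or_pos d with h0 | h0
        · exact Or.inl h0
        · right
          have h3 : d * (a₂ - 1) = d * a₂ - d := by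
            rw [Nat.mul_sub, Nat.mul_one]
          have h4 : 1 * (a₂ - 1) ≤ d * (a₂ - 1) := Nat.mul_le_mul_right _ h0
          omega
      have hR0 : d = 0 → d * a₂ = 0 := by intro h0; simp [h0]
      exact sg8_aux_j1 a₂ C₂ C₁ c₂ c₁ d (c₂ * a₂) (C₂ * a₂) (d * a₂) ha₂ hC₂1 hC₁lt h
        hQ e hd hexp h2d hdd hR0 s
  have hypos : 0 < C₂ * a₂ - 1 := by omega
  have hylt : C₂ * a₂ - 1 < a₃ := by omega
  refine ⟨⟨?_, ?_, ?_⟩, ?_, ?_⟩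
  · intro x hx hx3
    exact ⟨0, le_refl 0, hSG1 x hx hx3⟩
  · exact ⟨1, by omega, by omega, ⟨1, 0, by simp, by omega⟩, by omega⟩
  · exact ⟨C₂ * a₂ - 1, hypos, hylt, hbreak⟩
  · exact ⟨hypos, hylt, hbreak⟩
  · rintro z ⟨hz0, hz3, hzb⟩
    by_contra hcon
    push_neg at hcon
    apply hzb 0 (by omega)
    have e : z / a₂ * a₂ + z % a₂ = z := by rw [Nat.mul_comm]; exact Nat.div_add_mod z a₂
    have hr : z % a₂ < a₂ := Nat.mod_lt _ ha₂pos
    have hlt : z / a₂ < C₂ := by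
      by_contra hc
      push_neg at hc
      have h1 : C₂ * a₂ ≤ z / a₂ * a₂ := Nat.mul_le_mul_right _ hc
      omega
    refine ⟨z % a₂, z / a₂, by omega, ?_⟩
    obtain ⟨d, hd⟩ : ∃ d, C₂ = z / a₂ + 1 + d := ⟨C₂ - z / a₂ - 1, by omega⟩
    have hexp : C₂ * a₂ = z / a₂ * a₂ + a₂ + d * a₂ := by rw [hd]; ring
    have hdle : d ≤ d * a₂ := Nat.le_mul_of_pos_right _ ha₂pos
    have hR0 : d = 0 → d * a₂ = 0 := by intro h0; simp [h0]
    exact sg8_aux_lb a₂ C₂ z (z / a₂) (z % a₂) d (z / a₂ * a₂) (C₂ * a₂) (d * a₂)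
      ha₂ hQ e hr hd hexp hdle hR0 (by omega)
end

section
/- Every order-0 stride generator is canonical: if {1, a₂, a₃} (1 < a₂ < a₃) is an n-stride generator SG(n, 0) of order 0, then every break of SG(n, 0) is canonical. -/
/-- Minimal weight of a representation `m = c₂ * a₂ + c₁` is `m / a₂ + m % a₂`. -/
lemma minw (a₂ m c₁ c₂ : ℕ) (h : 1 ≤ a₂) (he : m = c₂ * a₂ + c₁) :
    m / a₂ + m % a₂ ≤ c₂ + c₁ := by
  have hc₂ : c₂ ≤ m / a₂ := Nat.le_div_iff_mul_le (by omega) |>.mpr (by omega)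
  obtain ⟨k, hk⟩ := Nat.le.dest hc₂
  have hdm := Nat.div_add_mod m a₂
  rw [← hk] at hdm ⊢
  have h1 : a₂ * (c₂ + k) = a₂ * c₂ + a₂ * k := Nat.mul_add a₂ c₂ k
  have h2 : k ≤ a₂ * k := Nat.le_mul_of_pos_left k (by omega)
  have h3 : a₂ * c₂ = c₂ * a₂ := Nat.mul_comm _ _
  omega

/-- Uniqueness of division with remainder. -/
lemma divmod_eq (a₂ T s m : ℕ) (h : 0 < a₂) (he : m = a₂ * T + s) (hs : s < a₂) :
    m / a₂ = T ∧ m % a₂ = s := by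
  subst he
  constructor
  · rw [Nat.mul_add_div h, Nat.div_eq_of_lt hs]
    omega
  · rw [Nat.mul_add_mod, Nat.mod_eq_of_lt hs]

lemma key' (a₂ q r Q R n j C s : ℕ) (h2 : 2 ≤ a₂) (hq : 1 ≤ q) (hqr : a₂ ≤ q + r)
    (hn : n ≤ Q + R) (hR : R < a₂) (hr : r < a₂)
    (hCs : a₂ * C + s = R + j * r) (hs : s < a₂) :
    n + j ≤ Q + j * q + C + s := by
  have hCj : C ≤ j := by
    have h5 : j * (r + 1) ≤ j * a₂ := Nat.mul_le_mul_left j (by omega)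
    have h6 : j * (r + 1) = j * r + j := by ring
    by_contra hcon
    push_neg at hcon
    have h9 : a₂ * (j + 1) ≤ a₂ * C := Nat.mul_le_mul_left a₂ (by omega)
    have h7 : a₂ * (j + 1) = a₂ * j + a₂ := by ring
    have h8 : j * a₂ = a₂ * j := Nat.mul_comm _ _
    omega
  have hB : j * a₂ ≤ j * q + j * r := by
    have h9 := Nat.mul_le_mul_left j hqr
    have h8 : j * (q + r) = j * q + j * r := by ring
    omega
  have hC2 : a₂ * C + a₂ * (j - C) = j * a₂ := by
    have e : a₂ * C + a₂ * (j - C) = a₂ * (C + (j - C)) := by ring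
    rw [e, show C + (j - C) = j from by omega]
    exact Nat.mul_comm _ _
  have hD : j - C ≤ a₂ * (j - C) := Nat.le_mul_of_pos_left _ (by omega)
  omega

theorem stmt9 (n a₂ a₃ : ℕ) (hn : 1 ≤ n) (ha₂ : 1 < a₂) (ha₃ : a₂ < a₃)
    (hsg : IsSG n 0 a₂ a₃) :
    ∀ y : ℕ, IsBreak n 0 a₂ a₃ y → CanonicalBreak n a₂ a₃ y := by
  intro y hy j hrep
  obtain ⟨hsg1, -, -⟩ := hsg
  obtain ⟨hy0, hy3, hbr⟩ := hy
  have ha₂0 : (0:ℕ) < a₂ := by omega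
  obtain ⟨q, r, hdm3, hrlt⟩ : ∃ q r, a₂ * q + r = a₃ ∧ r < a₂ :=
    ⟨a₃ / a₂, a₃ % a₂, Nat.div_add_mod _ _, Nat.mod_lt _ ha₂0⟩
  obtain ⟨Q, R, hdmy, hRlt⟩ : ∃ Q R, a₂ * Q + R = y ∧ R < a₂ :=
    ⟨y / a₂, y % a₂, Nat.div_add_mod _ _, Nat.mod_lt _ ha₂0⟩
  have hq1 : 1 ≤ q := by
    rcases Nat.eq_zero_or_pos q with h | h
    · subst h; simp at hdm3; omega
    · exact h
  -- SG1 at x = a₂ * q - 1 gives n ≥ q + a₂ - 2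
  have haq : a₂ ≤ a₂ * q := Nat.le_mul_of_pos_right a₂ hq1
  obtain ⟨i, hi0, c₁, c₂, hxe, hxle⟩ := hsg1 (a₂ * q - 1) (by omega) (by omega)
  interval_cases i
  have hnge : q + a₂ ≤ n + 2 := by
    have hfx := minw a₂ (a₂ * q - 1) c₁ c₂ (by omega) (by omega)
    have e1 : a₂ * ((q - 1) + 1) = a₂ * (q - 1) + a₂ := by ring
    rw [show (q - 1) + 1 = q from by omega] at e1
    obtain ⟨hd, hm⟩ := divmod_eq a₂ (q - 1) (a₂ - 1) (a₂ * q - 1) ha₂0 (by omega) (by omega)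
    omega
  -- break at j = 0 : minimal weight of y is ≥ n, i.e. n ≤ Q + R
  have hQR : n ≤ Q + R := by
    by_contra hcon
    push_neg at hcon
    refine hbr 0 (by omega) ⟨R, Q, ?_, by omega⟩
    have h3 : Q * a₂ = a₂ * Q := Nat.mul_comm _ _
    omega
  by_cases hcase : a₂ ≤ q + r
  · -- main case: use key'
    obtain ⟨c₁, c₂, he, hle⟩ := hrep
    obtain ⟨C, s, hCs, hslt⟩ : ∃ C s, a₂ * C + s = R + j * r ∧ s < a₂ :=
      ⟨(R + j * r) / a₂, (R + j * r) % a₂, Nat.div_add_mod _ _, Nat.mod_lt _ ha₂0⟩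
    have e3 : j * a₃ = j * (a₂ * q) + j * r := by rw [← hdm3]; ring
    have e1 : a₂ * (Q + j * q + C) = a₂ * Q + j * (a₂ * q) + a₂ * C := by ring
    have he2 : y + j * a₃ = a₂ * (Q + j * q + C) + s := by omega
    obtain ⟨hd, hm⟩ := divmod_eq a₂ (Q + j * q + C) s (y + j * a₃) ha₂0 he2 hslt
    have hmw := minw a₂ (y + j * a₃) c₁ c₂ (by omega) he
    have hkey := key' a₂ q r Q R n j C s (by omega) hq1 hcase hQR hRlt hrlt hCs hslt
    omega
  · -- small case: q + r < a₂ forces Q = q - 1, R = a₂ - 1, n = Q + R, and r = 0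
    push_neg at hcase
    have hQle : Q ≤ q := by
      by_contra hcon
      push_neg at hcon
      have h9 : a₂ * (q + 1) ≤ a₂ * Q := Nat.mul_le_mul_left a₂ (by omega)
      have h7 : a₂ * (q + 1) = a₂ * q + a₂ := by ring
      omega
    have hQne : Q ≠ q := by
      intro hQeq
      have hE : a₂ * Q = a₂ * q := by rw [hQeq]
      omega
    have hQ1 : Q = q - 1 := by omega
    have hR1 : R = a₂ - 1 := by omega
    have hr0 : r = 0 := by
      by_contra hcon
      -- r ≥ 1: exhibit a representation of y + a₃ of weight ≤ n, contradicting break at j = 1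
      refine hbr 1 (by omega) ⟨R + r - a₂, Q + q + 1, ?_, by omega⟩
      have e : (Q + q + 1) * a₂ = a₂ * Q + a₂ * q + a₂ := by ring
      omega
    -- r = 0 : f(y + j*a₃) = Q + j*q + R ≥ n + j
    obtain ⟨c₁, c₂, he, hle⟩ := hrep
    have e3 : j * a₃ = j * (a₂ * q) := by rw [← hdm3, hr0]; ring
    have e1 : a₂ * (Q + j * q) = a₂ * Q + j * (a₂ * q) := by ring
    obtain ⟨hd, hm⟩ := divmod_eq a₂ (Q + j * q) R (y + j * a₃) ha₂0 (by omega) hRlt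
    have hmw := minw a₂ (y + j * a₃) c₁ c₂ (by omega) he
    have hjq : j ≤ j * q := Nat.le_mul_of_pos_right j hq1
    omega
end

section
/- No set that is an order-0 stride generator can also be a stride generator of higher order: if {1, a₂, a₃} (1 < a₂ < a₃) is an n-stride generator SG(n, 0) of order 0 for some n ≥ 1, then there are no natural numbers n′ ≥ 1 and p′ ≥ 1 such that {1, a₂, a₃} is an n′-stride generator SG(n′, p′) of order p′. -/
def mincost (a₂ x : ℕ) : ℕ := x / a₂ + x % a₂

lemma div_mod_of {a₂ x k s : ℕ} (ha : 0 < a₂) (h : x = k * a₂ + s) (hs : s < a₂) :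
    x / a₂ = k ∧ x % a₂ = s := by
  have hcomm : x = s + k * a₂ := by omega
  constructor
  · rw [hcomm, Nat.add_mul_div_right _ _ ha, Nat.div_eq_of_lt hs, Nat.zero_add]
  · rw [hcomm, Nat.add_mul_mod_self_right, Nat.mod_eq_of_lt hs]

lemma mincost_eq {a₂ x k s : ℕ} (ha : 0 < a₂) (h : x = k * a₂ + s) (hs : s < a₂) :
    mincost a₂ x = k + s := by
  obtain ⟨hd, hm⟩ := div_mod_of ha h hs
  unfold mincost; rw [hd, hm]

lemma mincost_le_of_rep {a₂ x c₁ c₂ : ℕ} (ha : 0 < a₂) (h : x = c₂ * a₂ + c₁) :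
    mincost a₂ x ≤ c₂ + c₁ := by
  obtain ⟨d, m, hdm, hm⟩ : ∃ d m, a₂ * d + m = c₁ ∧ m < a₂ :=
    ⟨_, _, Nat.div_add_mod c₁ a₂, Nat.mod_lt _ ha⟩
  have h2 : d ≤ a₂ * d := Nat.le_mul_of_pos_left _ ha
  have hx : x = (c₂ + d) * a₂ + m := by rw [h, ← hdm]; ring
  rw [mincost_eq ha hx hm]
  omega

lemma mincost_step {a₂ a₃ q₃ r₃ : ℕ} (ha₂ : 1 < a₂)
    (h3 : a₂ * q₃ + r₃ = a₃) (hr₃ : r₃ < a₂) (hq₃ : 1 ≤ q₃)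
    (hA : a₂ ≤ q₃ + r₃ ∨ r₃ = 0) (u : ℕ) :
    mincost a₂ u + 1 ≤ mincost a₂ (u + a₃) := by
  have ha : 0 < a₂ := by omega
  obtain ⟨q, r, hqr, hr⟩ : ∃ q r, a₂ * q + r = u ∧ r < a₂ :=
    ⟨_, _, Nat.div_add_mod u a₂, Nat.mod_lt _ ha⟩
  have hu : mincost a₂ u = q + r := mincost_eq ha (by rw [← hqr]; ring) hr
  rcases lt_or_ge (r + r₃) a₂ with hnc | hcar
  · have hx : u + a₃ = (q + q₃) * a₂ + (r + r₃) := by rw [← hqr, ← h3]; ring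
    rw [mincost_eq ha hx hnc, hu]
    omega
  · have hr₃pos : 0 < r₃ := by
      rcases hA with h | h
      · omega
      · omega
    have ha2le : a₂ ≤ q₃ + r₃ := by
      rcases hA with h | h
      · exact h
      · omega
    obtain ⟨s, hs⟩ : ∃ s, r + r₃ = a₂ + s := ⟨r + r₃ - a₂, by omega⟩
    have hs2 : s < a₂ := by omega
    have hx : u + a₃ = (q + q₃ + 1) * a₂ + s := by
      rw [← hqr, ← h3]
      calc a₂ * q + r + (a₂ * q₃ + r₃) = a₂ * q + a₂ * q₃ + (r + r₃) := by ring
      _ = a₂ * q + a₂ * q₃ + (a₂ + s) := by rw [hs]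
      _ = (q + q₃ + 1) * a₂ + s := by ring
    rw [mincost_eq ha hx hs2, hu]
    omega

lemma mincost_iter {a₂ a₃ q₃ r₃ : ℕ} (ha₂ : 1 < a₂)
    (h3 : a₂ * q₃ + r₃ = a₃) (hr₃ : r₃ < a₂) (hq₃ : 1 ≤ q₃)
    (hA : a₂ ≤ q₃ + r₃ ∨ r₃ = 0) (x i : ℕ) :
    mincost a₂ x + i ≤ mincost a₂ (x + i * a₃) := by
  induction i with
  | zero => simp
  | succ k ih =>
    have hstep := mincost_step ha₂ h3 hr₃ hq₃ hA (x + k * a₃)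
    have hrw : x + (k + 1) * a₃ = (x + k * a₃) + a₃ := by ring
    rw [hrw]
    omega

lemma lemA {n a₂ a₃ q₃ r₃ : ℕ} (hn : 1 ≤ n) (ha₂ : 1 < a₂) (ha₃ : a₂ < a₃)
    (h3 : a₂ * q₃ + r₃ = a₃) (hr₃ : r₃ < a₂) (hq₃ : 1 ≤ q₃)
    (hsg : IsSG n 0 a₂ a₃) : a₂ ≤ q₃ + r₃ ∨ r₃ = 0 := by
  obtain ⟨h1, -, y, hy0, hy3, hy⟩ := hsg
  have ha : 0 < a₂ := by omega
  obtain ⟨q, r, hqr, hr⟩ : ∃ q r, a₂ * q + r = y ∧ r < a₂ :=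
    ⟨_, _, Nat.div_add_mod y a₂, Nat.mod_lt _ ha⟩
  have hyq : mincost a₂ y = q + r := mincost_eq ha (by rw [← hqr]; ring) hr
  -- SG1 gives q + r ≤ n
  have hyn' : q + r ≤ n := by
    obtain ⟨i, hi, c₁, c₂, heq, hc⟩ := h1 y hy0 hy3
    have hi0 : i = 0 := Nat.le_zero.mp hi
    subst hi0
    simp only [Nat.zero_mul, Nat.add_zero] at heq hc
    have := mincost_le_of_rep ha heq
    omega
  -- SG3 at j = 0 gives n ≤ q + r
  have hyn : n ≤ q + r := by
    by_contra hlt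
    push_neg at hlt
    exact hy 0 (by omega) ⟨r, q, by rw [← hqr]; ring, by omega⟩
  rcases lt_or_ge (r + r₃) a₂ with hnc | hcar
  · -- no carry case: use the element z = a₂*m + (a₂-1) where q₃ = m+1
    obtain ⟨m, hm⟩ : ∃ m, q₃ = m + 1 := ⟨q₃ - 1, by omega⟩
    set z := a₂ * m + (a₂ - 1) with hz
    have hz0 : 0 < z := lt_of_lt_of_le (by omega : 0 < a₂ - 1) (Nat.le_add_left _ _)
    have hz3 : z < a₃ := by
      rw [← h3, hm]
      have hrw : a₂ * (m + 1) + r₃ = a₂ * m + (a₂ + r₃) := by ring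
      rw [hrw]
      exact Nat.add_lt_add_left (by omega) _
    have hzn : m + (a₂ - 1) ≤ n := by
      obtain ⟨i, hi, c₁, c₂, heq, hc⟩ := h1 z hz0 hz3
      have hi0 : i = 0 := Nat.le_zero.mp hi
      subst hi0
      simp only [Nat.zero_mul, Nat.add_zero] at heq hc
      have hle := mincost_le_of_rep ha heq
      have hze : mincost a₂ z = m + (a₂ - 1) :=
        mincost_eq ha (by rw [hz]; ring) (by omega)
      omega
    have hq : q ≤ q₃ := by
      by_contra h
      push_neg at h
      have hmul : a₂ * (q₃ + 1) ≤ a₂ * q := Nat.mul_le_mul_left _ h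
      have hlt2 : a₃ < y := by
        rw [← h3, ← hqr]
        calc a₂ * q₃ + r₃ < a₂ * q₃ + a₂ := Nat.add_lt_add_left hr₃ _
        _ = a₂ * (q₃ + 1) := by ring
        _ ≤ a₂ * q := hmul
        _ ≤ a₂ * q + r := Nat.le_add_right _ _
      omega
    by_contra hcon
    push_neg at hcon
    obtain ⟨hcon1, hcon2⟩ := hcon
    rcases Nat.lt_or_ge q q₃ with hq2 | hq2
    · omega
    · have hqe : q = q₃ := le_antisymm hq hq2
      have hrr : r < r₃ := by
        rw [hqe] at hqr
        rw [← hqr, ← h3] at hy3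
        exact Nat.lt_of_add_lt_add_left hy3
      omega
  · -- carry case: SG3 at j = 1 forces a₂ ≤ q₃ + r₃
    left
    by_contra hcon
    push_neg at hcon
    obtain ⟨s, hs⟩ : ∃ s, r + r₃ = a₂ + s := ⟨r + r₃ - a₂, by omega⟩
    have hx : y + 1 * a₃ = (q + q₃ + 1) * a₂ + s := by
      rw [Nat.one_mul, ← hqr, ← h3]
      calc a₂ * q + r + (a₂ * q₃ + r₃) = a₂ * q + a₂ * q₃ + (r + r₃) := by ring
      _ = a₂ * q + a₂ * q₃ + (a₂ + s) := by rw [hs]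
      _ = (q + q₃ + 1) * a₂ + s := by ring
    exact hy 1 (by omega) ⟨s, q + q₃ + 1, hx, by omega⟩

theorem stmt10 (n a₂ a₃ : ℕ) (hn : 1 ≤ n) (ha₂ : 1 < a₂) (ha₃ : a₂ < a₃)
    (hsg : IsSG n 0 a₂ a₃) :
    ¬ ∃ n' p' : ℕ, 1 ≤ n' ∧ 1 ≤ p' ∧ IsSG n' p' a₂ a₃ := by
  rintro ⟨n', p', hn', hp', hsg'⟩
  have ha : 0 < a₂ := by omega
  obtain ⟨q₃, r₃, h3, hr₃⟩ : ∃ q₃ r₃, a₂ * q₃ + r₃ = a₃ ∧ r₃ < a₂ :=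
    ⟨_, _, Nat.div_add_mod a₃ a₂, Nat.mod_lt _ ha⟩
  have hq₃ : 1 ≤ q₃ := by
    rcases Nat.eq_zero_or_pos q₃ with h | h
    · exfalso
      rw [h, Nat.mul_zero, Nat.zero_add] at h3
      omega
    · exact h
  have hA := lemA hn ha₂ ha₃ h3 hr₃ hq₃ hsg
  obtain ⟨-, ⟨x, hx0, hx3, ⟨c₁, c₂, heq, hc⟩, hnot⟩, -⟩ := hsg'
  have h0 := hnot 0 hp'
  have hfx : n' + 1 ≤ mincost a₂ x := by
    by_contra h
    push_neg at h
    obtain ⟨d, m, hdm, hm⟩ : ∃ d m, a₂ * d + m = x ∧ m < a₂ :=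
      ⟨_, _, Nat.div_add_mod x a₂, Nat.mod_lt _ ha⟩
    have hme : mincost a₂ x = d + m := mincost_eq ha (by rw [← hdm]; ring) hm
    exact h0 ⟨m, d, by rw [← hdm]; ring, by omega⟩
  have h1 : mincost a₂ (x + p' * a₃) ≤ n' + p' :=
    le_trans (mincost_le_of_rep ha heq) hc
  have h2 := mincost_iter ha₂ h3 hr₃ hq₃ hA x p'
  omega
end

section
/- Let {1, a₂, a₃} (1 < a₂ < a₃) be an n-stride generator SG(n,p). (a) If a₃ > 2·a₂, then every break y of SG(n,p) satisfies a₃ − a₂ ≤ y < (a₃ − a₂) + n. (b) If a₃ < 2·a₂, then for every break y of SG(n,p) there exist a break y₀ with a₃ − a₂ ≤ y₀ < (a₃ − a₂) + n and a natural number i such that y = y₀ + i·(a₃ − a₂), and moreover y₀ + m·(a₃ − a₂) is a break of SG(n,p) for every m with 0 ≤ m ≤ i. -/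
theorem stmt11 (n p a₂ a₃ : ℕ) (hn : 1 ≤ n) (ha₂ : 1 < a₂) (ha₃ : a₂ < a₃)
    (hsg : IsSG n p a₂ a₃) :
    (2 * a₂ < a₃ → ∀ y : ℕ, IsBreak n p a₂ a₃ y →
      a₃ - a₂ ≤ y ∧ y < (a₃ - a₂) + n) ∧
    (a₃ < 2 * a₂ → ∀ y : ℕ, IsBreak n p a₂ a₃ y →
      ∃ y₀ i : ℕ, a₃ - a₂ ≤ y₀ ∧ y₀ < (a₃ - a₂) + n ∧ y = y₀ + i * (a₃ - a₂) ∧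
        ∀ m ≤ i, IsBreak n p a₂ a₃ (y₀ + m * (a₃ - a₂))) := by
  obtain ⟨hsg1, hsg2, hsg3⟩ := hsg
  have ha3n : n + 1 ≤ a₃ := by
    obtain ⟨y, hy0, hya, hyb⟩ := hsg3
    by_contra h
    exact hyb 0 (by omega) ⟨y, 0, by omega, by omega⟩
  have L2 : ∀ y, IsBreak n p a₂ a₃ y → a₃ - a₂ ≤ y := by
    rintro y ⟨hy0, hya, hyb⟩
    by_contra h
    push_neg at h
    obtain ⟨i, hip, c₁, c₂, heq, hle⟩ := hsg1 (y + a₂) (by omega) (by omega)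
    rcases Nat.eq_zero_or_pos c₂ with hc | hc
    · subst hc
      rcases Nat.eq_zero_or_pos i with hi | hi
      · subst hi
        exact hyb 0 (by omega) ⟨y, 0, by omega, by omega⟩
      · have h1 : i * (n + 1) ≤ i * a₃ := Nat.mul_le_mul (le_refl _) ha3n
        have h2 : i * (n + 1) = i * n + i := by ring
        have h3 : 1 * n ≤ i * n := Nat.mul_le_mul hi (le_refl _)
        omega
    · obtain ⟨k, rfl⟩ : ∃ k, c₂ = k + 1 := ⟨c₂ - 1, by omega⟩
      have h1 : (k + 1) * a₂ = k * a₂ + a₂ := by ring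
      exact hyb i (by omega) ⟨c₁, k, by omega, by omega⟩
  have L3 : ∀ y, IsBreak n p a₂ a₃ y → (a₃ - a₂) + n ≤ y →
      IsBreak n p a₂ a₃ (y - (a₃ - a₂)) := by
    rintro y ⟨hy0, hya, hyb⟩ hlb
    refine ⟨by omega, by omega, ?_⟩
    rintro j hj ⟨c₁, c₂, heq, hle⟩
    rcases j with _ | j'
    · rcases Nat.eq_zero_or_pos c₂ with hc | hc
      · subst hc; omega
      · have h1 : a₂ ≤ c₂ * a₂ := Nat.le_mul_of_pos_left a₂ hc
        omega
    · rcases Nat.eq_zero_or_pos c₂ with hc | hc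
      · subst hc
        have h1 : (j' + 1) * (n + 1) ≤ (j' + 1) * a₃ := Nat.mul_le_mul (le_refl _) ha3n
        have h2 : (j' + 1) * (n + 1) = j' * n + j' + n + 1 := by ring
        omega
      · obtain ⟨k, rfl⟩ : ∃ k, c₂ = k + 1 := ⟨c₂ - 1, by omega⟩
        have h1 : (k + 1) * a₂ = k * a₂ + a₂ := by ring
        have h2 : (j' + 1) * a₃ = j' * a₃ + a₃ := by ring
        exact hyb j' (by omega) ⟨c₁, k, by omega, by omega⟩
  constructor
  · intro hcase y hy
    refine ⟨L2 y hy, ?_⟩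
    by_contra h
    push_neg at h
    have h1 := L3 y hy h
    have h2 := L2 _ h1
    have h3 := hy.2.1
    omega
  · intro hcase y
    induction y using Nat.strong_induction_on with
    | _ y ih =>
      intro hy
      by_cases hc : y < (a₃ - a₂) + n
      · refine ⟨y, 0, L2 y hy, hc, by omega, ?_⟩
        intro m hm
        have hm0 : m = 0 := by omega
        subst hm0
        simpa using hy
      · have hge : (a₃ - a₂) + n ≤ y := by omega
        have hy' := L3 y hy hge
        obtain ⟨y₀, i, h1, h2, h3, h4⟩ := ih (y - (a₃ - a₂)) (by omega) hy'
        have h5 : (i + 1) * (a₃ - a₂) = i * (a₃ - a₂) + (a₃ - a₂) := by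
          rw [add_mul, one_mul]
        refine ⟨y₀, i + 1, h1, h2, by omega, ?_⟩
        intro m hm
        rcases Nat.lt_or_ge m (i + 1) with hm' | hm'
        · exact h4 m (by omega)
        · have hmi : m = i + 1 := by omega
          subst hmi
          have hEq : y₀ + (i + 1) * (a₃ - a₂) = y := by omega
          rw [hEq]
          exact hy
end

section
/- If {1, a₂, a₃} (1 < a₂ < a₃) is an n-stride generator SG(n,p), then a₂ ≤ n·(p+1) + 1. -/
/-- The "cheap representation" predicate: level `i` is usable for `x`. -/
def SGP (n p a₂ a₃ x i : ℕ) : Prop :=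
  i ≤ p ∧ (x + i * a₃) / a₂ + (x + i * a₃) % a₂ ≤ n + i

/-- The minimal usable level for `x`. -/
noncomputable def SGidx (n p a₂ a₃ x : ℕ) : ℕ :=
  sInf {i | SGP n p a₂ a₃ x i}

/-- The canonical decomposition minimizes the coefficient sum. -/
lemma sigma_min {a v c₁ c₂ : ℕ} (ha : 0 < a) (h : v = c₂ * a + c₁) :
    v / a + v % a ≤ c₂ + c₁ := by
  subst h
  have hm : (c₂ * a + c₁) % a = c₁ % a := by
    rw [Nat.add_comm (c₂ * a) c₁, Nat.add_mul_mod_self_right]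
  have hd : (c₂ * a + c₁) / a = c₁ / a + c₂ := by
    rw [Nat.add_comm (c₂ * a) c₁, Nat.add_mul_div_right _ _ ha]
  have h1 := Nat.div_add_mod c₁ a
  have h2 : c₁ / a ≤ a * (c₁ / a) := Nat.le_mul_of_pos_left _ ha
  omega

theorem stmt15 (n p a₂ a₃ : ℕ) (hn : 1 ≤ n) (ha₂ : 1 < a₂) (ha₃ : a₂ < a₃)
    (hsg : IsSG n p a₂ a₃) :
    a₂ ≤ n * (p + 1) + 1 := by
  obtain ⟨h1, -, -⟩ := hsg
  have ha2 : 0 < a₂ := by omega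
  have hex : ∀ x, 1 ≤ x → x ≤ a₂ → {i | SGP n p a₂ a₃ x i}.Nonempty := by
    intro x hx1 hx2
    obtain ⟨i, hip, c₁, c₂, heq, hle⟩ := h1 x (by omega) (by omega)
    exact ⟨i, hip, le_trans (sigma_min ha2 heq) hle⟩
  have key : ∀ x, 1 ≤ x → x ≤ a₂ →
      SGidx n p a₂ a₃ x ≤ p ∧
      (x + SGidx n p a₂ a₃ x * a₃) % a₂ ≤ n ∧
      (1 ≤ SGidx n p a₂ a₃ x → (x + SGidx n p a₂ a₃ x * a₃) % a₂ + 1 ≤ n) := by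
    intro x hx1 hx2
    have hmem : SGP n p a₂ a₃ x (SGidx n p a₂ a₃ x) := Nat.sInf_mem (hex x hx1 hx2)
    obtain ⟨hgp, hσ⟩ := hmem
    set g := SGidx n p a₂ a₃ x with hgdef
    have hd : g ≤ (x + g * a₃) / a₂ := by
      have h1' : g * a₂ ≤ x + g * a₃ :=
        le_trans (Nat.mul_le_mul le_rfl (le_of_lt ha₃)) (Nat.le_add_left _ _)
      calc g = g * a₂ / a₂ := (Nat.mul_div_cancel _ ha2).symm
        _ ≤ (x + g * a₃) / a₂ := Nat.div_le_div_right h1'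
    refine ⟨hgp, by omega, ?_⟩
    intro hg1
    by_contra hcon
    have hmlt : (x + g * a₃) % a₂ < a₂ := Nat.mod_lt _ ha2
    have hDeq : (x + g * a₃) / a₂ = g := by omega
    have hMeq : (x + g * a₃) % a₂ = n := by omega
    have hna : n < a₂ := by omega
    -- so x + g*a₃ = a₂ * g + n
    have hveq : x + g * a₃ = a₂ * g + n := by
      have h0 := Nat.div_add_mod (x + g * a₃) a₂
      rw [hDeq, hMeq] at h0
      exact h0.symm
    obtain ⟨j, hj⟩ : ∃ j, g = j + 1 := ⟨g - 1, by omega⟩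
    obtain ⟨r, hr, hr1⟩ : ∃ r, a₃ = a₂ + r ∧ 1 ≤ r := ⟨a₃ - a₂, by omega, by omega⟩
    have hveq' : x + (j + 1) * a₃ = a₂ * (j + 1) + n := by rw [← hj]; exact hveq
    have hxr : x + (j + 1) * r = n := by
      have h5 : (j + 1) * a₂ + (x + (j + 1) * r) = (j + 1) * a₂ + n := by
        calc (j + 1) * a₂ + (x + (j + 1) * r) = x + (j + 1) * (a₂ + r) := by ring
          _ = x + (j + 1) * a₃ := by rw [← hr]
          _ = a₂ * (j + 1) + n := hveq'
          _ = (j + 1) * a₂ + n := by ring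
      exact Nat.add_left_cancel h5
    -- level j is also usable, contradicting minimality of g = j+1
    have hlt : j < sInf {i | SGP n p a₂ a₃ x i} := by
      rw [show sInf {i | SGP n p a₂ a₃ x i} = SGidx n p a₂ a₃ x from rfl]
      omega
    have hnot : j ∉ {i | SGP n p a₂ a₃ x i} := Nat.notMem_of_lt_sInf hlt
    apply hnot
    refine ⟨by omega, ?_⟩
    obtain ⟨W, hW⟩ : ∃ W, x + j * r = W := ⟨_, rfl⟩
    have hWr : W + r = n := by
      rw [← hW, ← hxr]; ring
    have hWlt : W < a₂ := by omega
    have hw : x + j * a₃ = a₂ * j + W := by rw [← hW, hr]; ring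
    rw [hw, Nat.mul_add_div ha2, Nat.mul_add_mod, Nat.div_eq_of_lt hWlt,
      Nat.mod_eq_of_lt hWlt]
    omega
  -- counting via injection
  classical
  have hcard := Finset.card_le_card_of_injOn
      (s := Finset.Icc 1 a₂)
      (t := (Finset.Icc 1 p ×ˢ Finset.Icc 0 (n - 1)) ∪ ({0} ×ˢ Finset.Icc 0 n))
      (fun x => (SGidx n p a₂ a₃ x, (x + SGidx n p a₂ a₃ x * a₃) % a₂))
      (by
        intro x hx
        dsimp only
        rw [Finset.mem_coe, Finset.mem_Icc] at hx
        obtain ⟨hgp, hmod, hmod1⟩ := key x hx.1 hx.2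
        rw [Finset.mem_coe, Finset.mem_union]
        by_cases h0 : SGidx n p a₂ a₃ x = 0
        · right
          exact Finset.mem_product.mpr ⟨by simp [h0], Finset.mem_Icc.mpr ⟨Nat.zero_le _, hmod⟩⟩
        · left
          refine Finset.mem_product.mpr ⟨Finset.mem_Icc.mpr ⟨by omega, hgp⟩,
            Finset.mem_Icc.mpr ⟨Nat.zero_le _, ?_⟩⟩
          have := hmod1 (by omega)
          omega)
      (by
        intro x hx y hy heq
        dsimp only at heq
        rw [Finset.mem_coe, Finset.mem_Icc] at hx hy
        rw [Prod.mk.injEq] at heq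
        obtain ⟨hge, hme⟩ := heq
        rw [← hge] at hme
        have hmm : x % a₂ = y % a₂ :=
          Nat.ModEq.add_right_cancel' (SGidx n p a₂ a₃ x * a₃) hme
        by_cases hxe : x = a₂ <;> by_cases hye : y = a₂
        · rw [hxe, hye]
        · rw [hxe, Nat.mod_self] at hmm
          rw [Nat.mod_eq_of_lt (by omega : y < a₂)] at hmm
          omega
        · rw [hye, Nat.mod_self] at hmm
          rw [Nat.mod_eq_of_lt (by omega : x < a₂)] at hmm
          omega
        · rw [Nat.mod_eq_of_lt (by omega : x < a₂),
            Nat.mod_eq_of_lt (by omega : y < a₂)] at hmm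
          exact hmm)
  have hs : (Finset.Icc 1 a₂).card = a₂ := by rw [Nat.card_Icc]; omega
  have ht' : ((Finset.Icc 1 p ×ˢ Finset.Icc 0 (n - 1)) ∪ ({0} ×ˢ Finset.Icc 0 n)).card
      ≤ p * n + (n + 1) := by
    refine le_trans (Finset.card_union_le _ _) ?_
    rw [Finset.card_product, Finset.card_product, Nat.card_Icc, Nat.card_Icc, Nat.card_Icc,
      Finset.card_singleton]
    have e1 : p + 1 - 1 = p := by omega
    have e2 : n - 1 + 1 - 0 = n := by omega
    have e3 : n + 1 - 0 = n + 1 := by omega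
    rw [e1, e2, e3, Nat.one_mul]
  calc a₂ = (Finset.Icc 1 a₂).card := hs.symm
    _ ≤ _ := hcard
    _ ≤ p * n + (n + 1) := ht'
    _ = n * (p + 1) + 1 := by ring
end

section
/- For all natural numbers n > 1 and k > 1, the set {1, (k−1)·n, k·n} is an n-stride generator SG(n, p) for some order p ≤ k − 1. Consequently, for any n > 1 and any X there is an n-stride generator of length (i.e. with a₃) at least X. -/
lemma key (n k' : ℕ) (hn : 2 ≤ n) : IsSG n k' ((k'+1)*n) ((k'+2)*n) := by
  refine ⟨?_, ?_, ?_⟩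
  · -- SG1
    intro x hx hxlt
    obtain ⟨q, r, hxe, hr⟩ : ∃ q r, x = n*q + r ∧ r < n :=
      ⟨x/n, x%n, (Nat.div_add_mod x n).symm, Nat.mod_lt _ (by omega)⟩
    subst hxe
    have hqk : q ≤ k' + 1 := by
      by_contra hq
      push_neg at hq
      have h1 : n*(k'+2) ≤ n*q := Nat.mul_le_mul_left n (by omega)
      have h2 : (k'+2)*n = n*(k'+2) := by ring
      linarith
    rcases q with _ | q'
    · refine ⟨0, Nat.zero_le _, r, 0, by ring, by omega⟩
    · obtain ⟨d, hd⟩ : ∃ d, q' + 1 + d = k' + 1 := ⟨k' - q', by omega⟩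
      refine ⟨d, by omega, r, d + 1, ?_, by omega⟩
      rw [show k' + 2 = q' + 1 + d + 1 from by omega,
          show k' + 1 = q' + 1 + d from by omega]
      ring
  · -- SG2
    refine ⟨n + 1, by omega, ?_, ⟨1, k'+1, by ring, by omega⟩, ?_⟩
    · have h1 : 2*n ≤ (k'+2)*n := Nat.mul_le_mul_right n (by omega)
      linarith
    · rintro i hi ⟨c₁, c₂, heq, hsum⟩
      obtain ⟨m, r, hce, hrn⟩ : ∃ m r, c₁ = n*m + r ∧ r < n :=
        ⟨c₁/n, c₁%n, (Nat.div_add_mod c₁ n).symm, Nat.mod_lt _ (by omega)⟩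
      subst hce
      have e : n*(1 + i*(k'+2)) + 1 = n*(c₂*(k'+1) + m) + r := by
        have h1 : n*(1 + i*(k'+2)) + 1 = n + 1 + i*((k'+2)*n) := by ring
        have h2 : n*(c₂*(k'+1) + m) + r = c₂*((k'+1)*n) + (n*m + r) := by ring
        rw [h1, h2]; exact heq
      have hr1 : r = 1 := by
        have h1 : (n*(1 + i*(k'+2)) + 1) % n = 1 := by
          rw [Nat.mul_add_mod]; exact Nat.mod_eq_of_lt (by omega)
        have h2 : (n*(c₂*(k'+1) + m) + r) % n = r := by
          rw [Nat.mul_add_mod]; exact Nat.mod_eq_of_lt hrn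
        rw [e, h2] at h1; exact h1
      subst hr1
      have eAB : 1 + i*(k'+2) = c₂*(k'+1) + m := by
        have e2 : n*(1 + i*(k'+2)) = n*(c₂*(k'+1) + m) := by linarith
        exact Nat.eq_of_mul_eq_mul_left (by omega) e2
      rcases Nat.eq_zero_or_pos m with hm | hm
      · subst hm
        have e3 : c₂*(k'+1) = (i+1) + i*(k'+1) := by
          have h4 : i*(k'+2) = i*(k'+1) + i := by ring
          linarith
        have hci : i < c₂ := by
          by_contra hcc
          push_neg at hcc
          have h5 : c₂*(k'+1) ≤ i*(k'+1) := Nat.mul_le_mul_right _ hcc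
          linarith
        have e4 : (c₂ - i)*(k'+1) = i + 1 := by
          rw [Nat.sub_mul, e3, Nat.add_sub_cancel]
        have h6 : k'+1 ≤ (c₂-i)*(k'+1) := Nat.le_mul_of_pos_left _ (by omega)
        linarith
      · have hnm : n ≤ n*m := Nat.le_mul_of_pos_right n hm
        have hci : c₂ + 1 ≤ i := by linarith
        obtain ⟨j, hj⟩ : ∃ j, i = c₂ + 1 + j := ⟨i - c₂ - 1, by omega⟩
        subst hj
        have hm2 : m = 3 + c₂ + k' + j*(k'+2) := by
          have hx2 : (c₂+1+j)*(k'+2) = c₂*(k'+1) + (c₂ + k' + 2 + j*(k'+2)) := by ring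
          linarith
        have h2j : 2*j ≤ j*(k'+2) := by
          have h := Nat.mul_le_mul_left j (show 2 ≤ k'+2 by omega)
          linarith
        have hm3 : 3 + 2*j ≤ m := by linarith
        have h5 : n*(3+2*j) ≤ n*m := Nat.mul_le_mul_left n hm3
        have h6 : n*(3+2*j) = 3*n + 2*(n*j) := by ring
        have h7 : 2*j ≤ n*j := Nat.mul_le_mul_right j hn
        linarith
  · -- SG3
    have hpos : 0 < (k'+2)*n := by positivity
    have h04 : 4 ≤ (k'+2)*n := by
      have := Nat.mul_le_mul (show 2 ≤ k'+2 by omega) hn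
      omega
    refine ⟨(k'+2)*n - 1, ?_, ?_, ?_⟩
    · omega
    · omega
    rintro j hj ⟨c₁, c₂, heq, hsum⟩
    have hy : (k'+2)*n - 1 + 1 = (k'+2)*n := Nat.sub_add_cancel hpos
    have e0 : (j+1)*((k'+2)*n) = c₂*((k'+1)*n) + (c₁ + 1) := by
      have h1 : (j+1)*((k'+2)*n) = (k'+2)*n + j*((k'+2)*n) := by ring
      rw [h1]
      linarith [heq, hy]
    have hdvd : n ∣ c₁ + 1 := by
      have d1 : n ∣ (j+1)*((k'+2)*n) := ⟨(j+1)*(k'+2), by ring⟩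
      have d2 : n ∣ c₂*((k'+1)*n) := ⟨c₂*(k'+1), by ring⟩
      rw [e0] at d1
      exact (Nat.dvd_add_right d2).mp d1
    obtain ⟨s, hs⟩ := hdvd
    have hs1 : 1 ≤ s := by
      rcases Nat.eq_zero_or_pos s with h | h
      · subst h; simp at hs
      · exact h
    have e1 : (j+1)*(k'+2) = c₂*(k'+1) + s := by
      have h2 : n * ((j+1)*(k'+2)) = n * (c₂*(k'+1) + s) := by
        have hL : n*((j+1)*(k'+2)) = (j+1)*((k'+2)*n) := by ring
        have hR : n*(c₂*(k'+1) + s) = c₂*((k'+1)*n) + n*s := by ring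
        rw [hL, hR, e0, hs]
      exact Nat.eq_of_mul_eq_mul_left (by omega) h2
    have hsum2 : c₂ + c₁ + 1 ≤ n + j := by omega
    have hc2j : c₂ ≤ j := by
      have h3 : n ≤ n*s := Nat.le_mul_of_pos_right n hs1
      linarith
    have h3 : c₂*(k'+1) ≤ j*(k'+1) := Nat.mul_le_mul_right _ hc2j
    have h4 : j + k' + 2 ≤ s := by
      have hexp : (j+1)*(k'+2) = j*(k'+1) + (j+k'+2) := by ring
      linarith
    have h5 : n*(j+k'+2) ≤ n*s := Nat.mul_le_mul_left n h4
    have h6 : n*(j+k'+2) = n*j + n*k' + 2*n := by ring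
    have h7 : j ≤ n*j := Nat.le_mul_of_pos_left j (by omega)
    have h8 : 0 ≤ n*k' := Nat.zero_le _
    linarith [hsum2, hs, h5, h6, h7, h8, hn]

theorem stmt16 :
    (∀ n k : ℕ, 1 < n → 1 < k → ∃ p : ℕ, p ≤ k - 1 ∧ IsSG n p ((k - 1) * n) (k * n)) ∧
    (∀ n X : ℕ, 1 < n → ∃ a₂ a₃ p : ℕ, X ≤ a₃ ∧ 1 < a₂ ∧ a₂ < a₃ ∧ IsSG n p a₂ a₃) := by
  constructor
  · intro n k hn hk
    obtain ⟨k', rfl⟩ : ∃ k', k = k' + 2 := ⟨k - 2, by omega⟩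
    refine ⟨k', by omega, ?_⟩
    have h1 : k' + 2 - 1 = k' + 1 := by omega
    rw [h1]
    exact key n k' (by omega)
  · intro n X hn
    obtain ⟨k', hk'⟩ : ∃ k', max X 2 = k' + 2 := ⟨max X 2 - 2, by omega⟩
    refine ⟨(k'+1)*n, (k'+2)*n, k', ?_, ?_, ?_, key n k' (by omega)⟩
    · have h1 : X ≤ k' + 2 := by
        have := le_max_left X 2
        omega
      have h2 : k'+2 ≤ (k'+2)*n := Nat.le_mul_of_pos_right _ (by omega)
      omega
    · have h1 : 1*2 ≤ (k'+1)*n := Nat.mul_le_mul (by omega) (by omega)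
      linarith
    · have h0 : 0 < n := by omega
      exact Nat.mul_lt_mul_of_lt_of_le (by omega) (le_refl n) h0
end
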